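/- Let h_1,…,h_N be Hermitian d×d complex matrices with H = ∑_{j=1}^N h_j. Then for every real Δ, ‖∏_{j=1}^N exp(−i h_j Δ) − exp(−iHΔ)‖ ≤ (Δ²/2) · ∑_{1 ≤ j < k ≤ N} ‖[h_j, h_k]‖, where [h_j,h_k] = h_j h_k − h_k h_j and ‖·‖ is the operator norm. -/

import Mathlib

set_option maxHeartbeats 1000000

open scoped Matrix.Norms.L2Operator
open NormedSpace

namespace TrotterAux

/- Two generic noncommutative-ring identities. -/
lemma ring_id1 {R : Type*} [Ring R] (e f b x : R) (h1 : x * e = e * x)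
    (h2 : x * f = f * x) :
    e * (x * b - b * x) * f = x * e * b * f + e * b * -(f * x) := by
  rw [h1, ← h2]; noncomm_ring

lemma ring_id2 {R : Type*} [Ring R] (g p q x y : R) :
    g * ((p * y - y * p) * q) = -(g * (x + y)) * (p * q) + g * (x * p * q + p * (y * q)) := by
  noncomm_ring

variable {d : ℕ}

noncomputable def E (X : Matrix (Fin d) (Fin d) ℂ) (u : ℝ) : Matrix (Fin d) (Fin d) ℂ :=
  exp (u • X)

variable (X Y B : Matrix (Fin d) (Fin d) ℂ)

lemma hasDerivAt_E (u : ℝ) : HasDerivAt (E X) (E X u * X) u :=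
  hasDerivAt_exp_smul_const _ u

lemma hasDerivAt_E' (u : ℝ) : HasDerivAt (E X) (X * E X u) u :=
  hasDerivAt_exp_smul_const' _ u

lemma continuous_E : Continuous (E X) :=
  continuous_iff_continuousAt.2 fun s => (hasDerivAt_E X s).continuousAt

lemma hasDerivAt_E_neg (u : ℝ) :
    HasDerivAt (fun v : ℝ => E X (-v)) (-(E X (-u) * X)) u := by
  have h := (hasDerivAt_E X (-u)).scomp u (hasDerivAt_neg u)
  simpa only [Function.comp_def, neg_one_smul] using h

lemma E_mul_E_neg (u : ℝ) : E X u * E X (-u) = 1 := by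
  rw [E, E, ← Matrix.exp_add_of_commute _ _ (((Commute.refl X).smul_left u).smul_right (-u)),
    ← add_smul, add_neg_cancel, zero_smul, exp_zero]

lemma E_neg_mul_E (u : ℝ) : E X (-u) * E X u = 1 := by
  have := E_mul_E_neg X (-u); rwa [neg_neg] at this

lemma E_zero : E X 0 = 1 := by rw [E, zero_smul, exp_zero]

lemma commE (u : ℝ) : X * E X u = E X u * X :=
  ((((Commute.refl X).smul_right u)).exp_right).eq

/-- Core commutator-growth bound. -/
lemma comm_core
    (hn1 : ∀ (u : ℝ) (W : Matrix (Fin d) (Fin d) ℂ), ‖E X u * W‖ = ‖W‖)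
    (hn2 : ∀ (u : ℝ) (W : Matrix (Fin d) (Fin d) ℂ), ‖W * E X u‖ = ‖W‖) (s : ℝ) :
    ‖E X s * B - B * E X s‖ ≤ |s| * ‖X * B - B * X‖ := by
  set k : ℝ → Matrix (Fin d) (Fin d) ℂ := fun u => E X u * B * E X (-u) with hk
  have hderiv : ∀ u : ℝ, HasDerivAt k (E X u * (X * B - B * X) * E X (-u)) u := by
    intro u
    have h3 := ((hasDerivAt_E' X u).mul_const B).mul (hasDerivAt_E_neg X u)
    rw [ring_id1 (E X u) (E X (-u)) B X (commE X u) (commE X (-u))]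
    exact h3
  have hbound : ∀ u : ℝ, ‖E X u * (X * B - B * X) * E X (-u)‖ ≤ ‖X * B - B * X‖ := by
    intro u; rw [hn2, hn1]
  have hmv : ‖k s - k 0‖ ≤ ‖X * B - B * X‖ * ‖s - (0 : ℝ)‖ :=
    Convex.norm_image_sub_le_of_norm_hasDerivWithin_le
      (fun x _ => (hderiv x).hasDerivWithinAt) (fun x _ => hbound x) convex_univ
      (Set.mem_univ 0) (Set.mem_univ s)
  have hk0 : k 0 = B := by
    simp only [hk, neg_zero, E_zero, one_mul, mul_one]
  have key : E X s * B - B * E X s = (k s - k 0) * E X s := by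
    rw [hk0, hk, sub_mul, mul_assoc, mul_assoc, E_neg_mul_E, mul_one]
  rw [key, hn2]
  calc ‖k s - k 0‖ ≤ ‖X * B - B * X‖ * ‖s - (0:ℝ)‖ := hmv
    _ = |s| * ‖X * B - B * X‖ := by rw [sub_zero, Real.norm_eq_abs, mul_comm]

/-- Core two-term Trotter bound. -/
lemma two_term_core
    (hnX1 : ∀ (u : ℝ) (W : Matrix (Fin d) (Fin d) ℂ), ‖E X u * W‖ = ‖W‖)
    (hnX2 : ∀ (u : ℝ) (W : Matrix (Fin d) (Fin d) ℂ), ‖W * E X u‖ = ‖W‖)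
    (hnY2 : ∀ (u : ℝ) (W : Matrix (Fin d) (Fin d) ℂ), ‖W * E Y u‖ = ‖W‖)
    (hnZ1 : ∀ (u : ℝ) (W : Matrix (Fin d) (Fin d) ℂ), ‖E (X + Y) u * W‖ = ‖W‖)
    (t : ℝ) :
    ‖E X t * E Y t - E (X + Y) t‖ ≤ t ^ 2 / 2 * ‖X * Y - Y * X‖ := by
  set C : ℝ := ‖X * Y - Y * X‖ with hC
  have hC0 : 0 ≤ C := norm_nonneg _
  set F : ℝ → Matrix (Fin d) (Fin d) ℂ :=
    fun u => E (X + Y) (-u) * (E X u * E Y u) with hF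
  set F' : ℝ → Matrix (Fin d) (Fin d) ℂ :=
    fun u => E (X + Y) (-u) * ((E X u * Y - Y * E X u) * E Y u) with hF'
  have hderiv : ∀ u : ℝ, HasDerivAt F (F' u) u := by
    intro u
    have hp : HasDerivAt (fun v => E X v * E Y v)
        (X * E X u * E Y u + E X u * (Y * E Y u)) u :=
      (hasDerivAt_E' X u).mul (hasDerivAt_E' Y u)
    have h4 := (hasDerivAt_E_neg (X + Y) u).mul hp
    have heq : F' u = -(E (X + Y) (-u) * (X + Y)) * (E X u * E Y u)
        + E (X + Y) (-u) * (X * E X u * E Y u + E X u * (Y * E Y u)) :=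
      ring_id2 (E (X + Y) (-u)) (E X u) (E Y u) X Y
    rw [heq]
    exact h4
  have hbound : ∀ u : ℝ, ‖F' u‖ ≤ C * |u| := by
    intro u
    rw [hF']
    simp only [hnZ1, hnY2]
    calc ‖E X u * Y - Y * E X u‖ ≤ |u| * C := comm_core X Y hnX1 hnX2 u
      _ = C * |u| := mul_comm _ _
  have hcont : Continuous F' := by
    apply Continuous.mul
    · exact (continuous_E (X + Y)).comp continuous_neg
    · exact (((continuous_E X).mul continuous_const).sub
        (continuous_const.mul (continuous_E X))).mul (continuous_E Y)
  have hint : F t - F 0 = ∫ u in (0:ℝ)..t, F' u :=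
    (intervalIntegral.integral_eq_sub_of_hasDerivAt
      (fun u _ => hderiv u) (hcont.intervalIntegrable _ _)).symm
  set g : ℝ → ℝ := fun u => C * |u| with hg
  have hnormint : ‖F t - F 0‖ ≤ |∫ u in (0:ℝ)..t, g u| := by
    rw [hint]
    exact intervalIntegral.norm_integral_le_abs_of_norm_le
      (Filter.Eventually.of_forall fun u => hbound u)
      ((continuous_const.mul continuous_abs).intervalIntegrable _ _)
  have hval : |∫ u in (0:ℝ)..t, g u| = C * (t ^ 2 / 2) := by
    rw [hg]
    rw [intervalIntegral.integral_const_mul, abs_mul, abs_of_nonneg hC0]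
    congr 1
    rcases le_or_gt 0 t with ht | ht
    · have h1 : ∫ u in (0:ℝ)..t, |u| = ∫ u in (0:ℝ)..t, u := by
        apply intervalIntegral.integral_congr
        intro u hu
        rw [Set.uIcc_of_le ht] at hu
        exact abs_of_nonneg hu.1
      rw [h1, integral_id, show ((t:ℝ) ^ 2 - 0 ^ 2) / 2 = t ^ 2 / 2 from by ring]
      exact abs_of_nonneg (by positivity)
    · have h1 : ∫ u in (0:ℝ)..t, |u| = ∫ u in (0:ℝ)..t, -u := by
        apply intervalIntegral.integral_congr
        intro u hu
        rw [Set.uIcc_of_ge ht.le] at hu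
        exact abs_of_nonpos hu.2
      rw [h1, intervalIntegral.integral_neg, integral_id, abs_neg,
        show ((t:ℝ) ^ 2 - 0 ^ 2) / 2 = t ^ 2 / 2 from by ring]
      exact abs_of_nonneg (by positivity)
  have hF0 : F 0 = 1 := by
    simp only [hF, neg_zero, E_zero, one_mul, mul_one]
  have key : E X t * E Y t - E (X + Y) t = E (X + Y) t * (F t - F 0) := by
    rw [hF0, hF, mul_sub, mul_one, ← mul_assoc, E_mul_E_neg, one_mul]
  rw [key, hnZ1]
  calc ‖F t - F 0‖ ≤ |∫ u in (0:ℝ)..t, g u| := hnormint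
    _ = C * (t ^ 2 / 2) := hval
    _ = t ^ 2 / 2 * C := mul_comm _ _


/-! ### Hermitian layer -/

noncomputable def U (A : Matrix (Fin d) (Fin d) ℂ) (s : ℝ) : Matrix (Fin d) (Fin d) ℂ :=
  E ((-Complex.I) • A) s

lemma skew_mem {A : Matrix (Fin d) (Fin d) ℂ} (hA : A.IsHermitian) (s : ℝ) :
    s • ((-Complex.I) • A) ∈ skewAdjoint (Matrix (Fin d) (Fin d) ℂ) := by
  rw [skewAdjoint.mem_iff, star_smul, star_trivial, star_smul,
    Matrix.star_eq_conjTranspose, hA.eq]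
  simp [Complex.conj_I]

lemma U_unitary {A : Matrix (Fin d) (Fin d) ℂ} (hA : A.IsHermitian) (s : ℝ) :
    E ((-Complex.I) • A) s ∈ unitary (Matrix (Fin d) (Fin d) ℂ) :=
  by letI : NormedAlgebra ℚ (Matrix (Fin d) (Fin d) ℂ) := NormedAlgebra.restrictScalars ℚ ℂ _
     exact exp_mem_unitary_of_mem_skewAdjoint (skew_mem hA s)

lemma norm_U_mul {A : Matrix (Fin d) (Fin d) ℂ} (hA : A.IsHermitian) :
    ∀ (u : ℝ) (W : Matrix (Fin d) (Fin d) ℂ), ‖E ((-Complex.I) • A) u * W‖ = ‖W‖ :=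
  fun u W => CStarRing.norm_mem_unitary_mul W (U_unitary hA u)

lemma norm_mul_U {A : Matrix (Fin d) (Fin d) ℂ} (hA : A.IsHermitian) :
    ∀ (u : ℝ) (W : Matrix (Fin d) (Fin d) ℂ), ‖W * E ((-Complex.I) • A) u‖ = ‖W‖ :=
  fun u W => CStarRing.norm_mul_mem_unitary W (U_unitary hA u)

lemma two_term {A B : Matrix (Fin d) (Fin d) ℂ} (hA : A.IsHermitian)
    (hB : B.IsHermitian) (t : ℝ) :
    ‖U A t * U B t - U (A + B) t‖ ≤ t ^ 2 / 2 * ‖A * B - B * A‖ := by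
  have hXY : (-Complex.I) • A + (-Complex.I) • B = (-Complex.I) • (A + B) :=
    (smul_add _ _ _).symm
  have h := two_term_core ((-Complex.I) • A) ((-Complex.I) • B)
    (norm_U_mul hA) (norm_mul_U hA) (norm_mul_U hB)
    (by rw [hXY]; exact norm_U_mul (hA.add hB)) t
  rw [hXY] at h
  refine le_trans (by exact h) (le_of_eq ?_)
  congr 1
  have e1 : ((-Complex.I) • A) * ((-Complex.I) • B) = (-1 : ℂ) • (A * B) := by
    rw [smul_mul_assoc, mul_smul_comm, smul_smul]
    norm_num
  have e2 : ((-Complex.I) • B) * ((-Complex.I) • A) = (-1 : ℂ) • (B * A) := by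
    rw [smul_mul_assoc, mul_smul_comm, smul_smul]
    norm_num
  rw [e1, e2, ← smul_sub, norm_smul]
  simp

lemma U_zero (t : ℝ) : U (0 : Matrix (Fin d) (Fin d) ℂ) t = 1 := by
  rw [U, smul_zero, E, smul_zero, exp_zero]

lemma isHermitian_list_sum : ∀ L : List (Matrix (Fin d) (Fin d) ℂ),
    (∀ A ∈ L, A.IsHermitian) → L.sum.IsHermitian
  | [], _ => by simp
  | A :: T, hL => by
    rw [List.sum_cons]
    exact (hL A List.mem_cons_self).add
      (isHermitian_list_sum T fun B hB => hL B (List.mem_cons_of_mem _ hB))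

lemma comm_sum_le (A : Matrix (Fin d) (Fin d) ℂ) : ∀ L : List (Matrix (Fin d) (Fin d) ℂ),
    ‖A * L.sum - L.sum * A‖ ≤ (L.map fun B => ‖A * B - B * A‖).sum
  | [] => by simp
  | B :: T => by
    rw [List.sum_cons, List.map_cons, List.sum_cons]
    have e : A * (B + T.sum) - (B + T.sum) * A
        = (A * B - B * A) + (A * T.sum - T.sum * A) := by noncomm_ring
    rw [e]
    exact (norm_add_le _ _).trans (by gcongr; exact comm_sum_le A T)

noncomputable def pairSum : List (Matrix (Fin d) (Fin d) ℂ) → ℝ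
  | [] => 0
  | A :: T => (T.map fun B => ‖A * B - B * A‖).sum + pairSum T

lemma list_bound (t : ℝ) : ∀ L : List (Matrix (Fin d) (Fin d) ℂ),
    (∀ A ∈ L, A.IsHermitian) →
    ‖(L.map fun A => U A t).prod - U L.sum t‖ ≤ t ^ 2 / 2 * pairSum L
  | [], _ => by simp [pairSum, U_zero]
  | A :: T, hL => by
    have hA : A.IsHermitian := hL A List.mem_cons_self
    have hT : ∀ B ∈ T, Matrix.IsHermitian B := fun B hB => hL B (List.mem_cons_of_mem _ hB)
    have hS : T.sum.IsHermitian := isHermitian_list_sum T hT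
    rw [List.map_cons, List.prod_cons, List.sum_cons]
    set P := (T.map fun A => U A t).prod with hP
    have split : U A t * P - U (A + T.sum) t
        = U A t * (P - U T.sum t) + (U A t * U T.sum t - U (A + T.sum) t) := by
      noncomm_ring
    rw [split]
    calc ‖U A t * (P - U T.sum t) + (U A t * U T.sum t - U (A + T.sum) t)‖
        ≤ ‖U A t * (P - U T.sum t)‖ + ‖U A t * U T.sum t - U (A + T.sum) t‖ :=
          norm_add_le _ _
      _ = ‖P - U T.sum t‖ + ‖U A t * U T.sum t - U (A + T.sum) t‖ := by
          rw [show ‖U A t * (P - U T.sum t)‖ = ‖P - U T.sum t‖ from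
            norm_U_mul hA t (P - U T.sum t)]
      _ ≤ t ^ 2 / 2 * pairSum T + t ^ 2 / 2 * ‖A * T.sum - T.sum * A‖ := by
          gcongr
          · exact list_bound t T hT
          · exact two_term hA hS t
      _ ≤ t ^ 2 / 2 * pairSum T + t ^ 2 / 2 * (T.map fun B => ‖A * B - B * A‖).sum :=
          add_le_add_right (mul_le_mul_of_nonneg_left (comm_sum_le A T) (by positivity)) _
      _ = t ^ 2 / 2 * pairSum (A :: T) := by rw [pairSum]; ring

lemma pairSum_ofFn : ∀ {N : ℕ} (h : Fin N → Matrix (Fin d) (Fin d) ℂ),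
    pairSum (List.ofFn h)
      = ∑ j : Fin N, ∑ k ∈ Finset.univ.filter (fun k => j < k), ‖h j * h k - h k * h j‖ := by
  intro N
  induction N with
  | zero => intro h; simp [pairSum]
  | succ n ih =>
    intro h
    rw [List.ofFn_succ]
    simp only [pairSum, List.map_ofFn, List.sum_ofFn, ih, Finset.sum_filter,
      Fin.sum_univ_succ, Function.comp_apply]
    simp [Fin.succ_pos, Fin.succ_lt_succ_iff, lt_self_iff_false, Fin.not_lt_zero]

lemma U_eq (A : Matrix (Fin d) (Fin d) ℂ) (t : ℝ) :
    U A t = NormedSpace.exp ((-(t : ℂ) * Complex.I) • A) := by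
  rw [U, E, ← smul_assoc,
    show t • (-Complex.I) = -(t : ℂ) * Complex.I from by rw [Complex.real_smul]; ring]

end TrotterAux

/-- **First-order Lie–Trotter commutator bound**: for Hermitian `h 1, …, h N` with
`H = ∑ j, h j`, the ordered product `∏ j, exp (-i Δ h j)` approximates `exp (-i Δ H)`
with operator-norm error at most `(Δ² / 2) * ∑_{j < k} ‖[h j, h k]‖`. -/
theorem first_order_trotter_commutator_bound {d N : ℕ}
    (h : Fin N → Matrix (Fin d) (Fin d) ℂ)
    (hherm : ∀ l, (h l).IsHermitian)
    (H : Matrix (Fin d) (Fin d) ℂ) (hH : H = ∑ l, h l) (Δ : ℝ) :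
    ‖(List.ofFn fun j => NormedSpace.exp ((-(Δ : ℂ) * Complex.I) • h j)).prod
        - NormedSpace.exp ((-(Δ : ℂ) * Complex.I) • H)‖
      ≤ Δ ^ 2 / 2 *
        ∑ j : Fin N, ∑ k ∈ Finset.univ.filter (fun k => j < k),
          ‖h j * h k - h k * h j‖ := by
  have hofn : (List.ofFn fun j => NormedSpace.exp ((-(Δ : ℂ) * Complex.I) • h j))
      = (List.ofFn h).map (fun A => TrotterAux.U A Δ) := by
    rw [List.map_ofFn]
    exact congrArg List.ofFn (funext fun j => (TrotterAux.U_eq (h j) Δ).symm)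
  have hsum : H = (List.ofFn h).sum := by rw [hH, List.sum_ofFn]
  rw [hofn, hsum, ← TrotterAux.U_eq, ← TrotterAux.pairSum_ofFn h]
  exact TrotterAux.list_bound Δ (List.ofFn h)
    (fun A hA => by
      obtain ⟨i, hi⟩ := List.mem_ofFn.1 hA
      exact hi ▸ hherm i)
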